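/- Super-fast vanishing of the Hellinger distance under unbounded covariance parameters (Proposition 3.1): Let Θ ⊂ ℝ^{d₁}, let Ω = S_{d₂}^{++} be the set of ALL d₂×d₂ symmetric positive definite matrices (d₂ ≥ 1), and let {f(·|θ,Σ) : (θ,Σ) ∈ Θ×Ω} be any family of probability densities on X (measurable in x). Fix k₀ ≥ 1, G₀ ∈ E_{k₀}(Θ×Ω), and an integer k ≥ k₀+1. Then for every r ≥ 1 and every β > 0: lim_{ε→0⁺} inf{ exp(1/W_r(G,G₀)^β) · h(p_G, p_{G₀}) : G ∈ O_k(Θ×Ω), 0 < W_r(G,G₀) ≤ ε } = 0. -/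

import Mathlib

open MeasureTheory Matrix

noncomputable section

attribute [local instance] Matrix.normedAddCommGroup Matrix.normedSpace

abbrev Vec (d : ℕ) := Fin d → ℝ
abbrev Mat (d : ℕ) := Matrix (Fin d) (Fin d) ℝ

/-- Euclidean norm on `Fin d → ℝ`. -/
def vnorm {d : ℕ} (v : Vec d) : ℝ := Real.sqrt (∑ i, v i ^ 2)

/-- Frobenius (entrywise ℓ²) norm on matrices. -/
def mnorm {d : ℕ} (A : Mat d) : ℝ := Real.sqrt (∑ i, ∑ j, A i j ^ 2)

/-- The ground distance ‖θ−θ'‖ + ‖Σ−Σ'‖ on the parameter space. -/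
def parDist {d₁ d₂ : ℕ} (p q : Vec d₁ × Mat d₂) : ℝ :=
  vnorm (p.1 - q.1) + mnorm (p.2 - q.2)

/-- A discrete mixing measure with exactly `k` distinct atoms in `P`,
with strictly positive weights summing to one. -/
structure Mix (P : Type*) (k : ℕ) where
  w : Fin k → ℝ
  atom : Fin k → P
  w_pos : ∀ i, 0 < w i
  w_sum : ∑ i, w i = 1
  atom_inj : Function.Injective atom

/-- The mixture density `p_G(x) = ∑ i p_i f(x|θ_i,Σ_i)`. -/
def Mix.density {P X : Type*} {k : ℕ} (f : P → X → ℝ) (G : Mix P k) (x : X) : ℝ :=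
  ∑ i, G.w i * f (G.atom i) x

/-- The `r`-th power Wasserstein transport cost between two mixing measures,
with ground distance `ρ`. -/
def WrPow {P : Type*} (ρ : P → P → ℝ) (r : ℝ) {k k' : ℕ}
    (G : Mix P k) (G' : Mix P k') : ℝ :=
  sInf { c : ℝ | ∃ q : Fin k → Fin k' → ℝ,
    (∀ i j, 0 ≤ q i j) ∧ (∀ i, ∑ j, q i j = G.w i) ∧ (∀ j, ∑ i, q i j = G'.w j) ∧
    c = ∑ i, ∑ j, q i j * ρ (G.atom i) (G'.atom j) ^ r }

/-- The `r`-th order Wasserstein distance between mixing measures. -/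
def Wr {P : Type*} (ρ : P → P → ℝ) (r : ℝ) {k k' : ℕ}
    (G : Mix P k) (G' : Mix P k') : ℝ :=
  WrPow ρ r G G' ^ (1 / r)

/-- The total variation distance between two densities on `X`. -/
def TV {d : ℕ} (X : Set (Vec d)) (p q : Vec d → ℝ) : ℝ :=
  (1 / 2) * ∫ x in X, |p x - q x|

/-- Directional derivative in the location parameter:  `βᵀ ∂f/∂θ (x|θ,Σ)`. -/
def dTheta {d d₁ d₂ : ℕ} (f : Vec d₁ × Mat d₂ → Vec d → ℝ)
    (p : Vec d₁ × Mat d₂) (β : Vec d₁) (x : Vec d) : ℝ :=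
  deriv (fun t : ℝ => f (p.1 + t • β, p.2) x) 0

/-- Directional derivative in the matrix parameter:  `tr((∂f/∂Σ (x|θ,Σ))ᵀ γ)`. -/
def dSigma {d d₁ d₂ : ℕ} (f : Vec d₁ × Mat d₂ → Vec d → ℝ)
    (p : Vec d₁ × Mat d₂) (γ : Mat d₂) (x : Vec d) : ℝ :=
  deriv (fun t : ℝ => f (p.1, p.2 + t • γ) x) 0


lemma vnorm_nonneg {d : ℕ} (v : Vec d) : 0 ≤ vnorm v := Real.sqrt_nonneg _
lemma mnorm_nonneg {d : ℕ} (A : Mat d) : 0 ≤ mnorm A := Real.sqrt_nonneg _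
lemma parDist_nonneg {d₁ d₂ : ℕ} (p q : Vec d₁ × Mat d₂) : 0 ≤ parDist p q :=
  add_nonneg (vnorm_nonneg _) (mnorm_nonneg _)
lemma vnorm_zero {d : ℕ} : vnorm (0 : Vec d) = 0 := by simp [vnorm]
lemma mnorm_zero {d : ℕ} : mnorm (0 : Mat d) = 0 := by
  simp [mnorm]
lemma parDist_self {d₁ d₂ : ℕ} (p : Vec d₁ × Mat d₂) : parDist p p = 0 := by
  simp [parDist, vnorm_zero, mnorm_zero]

def toE {d : ℕ} (A : Mat d) : EuclideanSpace ℝ (Fin d × Fin d) := WithLp.toLp 2 (fun p : Fin d × Fin d => A p.1 p.2)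

lemma mnorm_eq_norm {d : ℕ} (A : Mat d) : mnorm A = ‖toE A‖ := by
  rw [EuclideanSpace.norm_eq, mnorm]
  congr 1
  rw [← Finset.sum_product']
  · exact Finset.sum_congr rfl (fun p _ => by simp [toE, Real.norm_eq_abs, sq_abs])

lemma mnorm_add_le {d : ℕ} (A B : Mat d) : mnorm (A + B) ≤ mnorm A + mnorm B := by
  have h : toE (A + B) = toE A + toE B := rfl
  rw [mnorm_eq_norm, mnorm_eq_norm, mnorm_eq_norm, h]
  exact norm_add_le _ _

lemma mnorm_smul_one_le {d : ℕ} (hd : 1 ≤ d) {R : ℝ} (hR : 0 ≤ R) :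
    mnorm (R • (1 : Mat d)) ≤ d * R := by
  rw [mnorm]
  have h1 : ∀ i : Fin d, ∑ j, ((R • (1 : Mat d)) i j) ^ 2 = R ^ 2 := by
    intro i
    have h2 : ∀ j : Fin d, ((R • (1 : Mat d)) i j) ^ 2 = if i = j then R ^ 2 else 0 := by
      intro j
      by_cases h : i = j <;> simp [h, Matrix.one_apply, Matrix.smul_apply]
    rw [Finset.sum_congr rfl (fun j _ => h2 j), Finset.sum_ite_eq Finset.univ i (fun _ => R ^ 2)]
    simp
  rw [Finset.sum_congr rfl (fun i _ => h1 i), Finset.sum_const, Finset.card_univ,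
    Fintype.card_fin, nsmul_eq_mul]
  calc Real.sqrt (d * R ^ 2) ≤ Real.sqrt ((d * R) ^ 2) := by
        apply Real.sqrt_le_sqrt
        have h3 : (1 : ℝ) ≤ d := by exact_mod_cast hd
        nlinarith [sq_nonneg R]
    _ = d * R := Real.sqrt_sq (by positivity)

lemma abs_entry_le_mnorm {d : ℕ} (A : Mat d) (i j : Fin d) : |A i j| ≤ mnorm A := by
  rw [mnorm, ← Real.sqrt_sq_eq_abs]
  apply Real.sqrt_le_sqrt
  calc A i j ^ 2 ≤ ∑ j', A i j' ^ 2 :=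
        Finset.single_le_sum (f := fun j' => A i j' ^ 2)
          (fun _ _ => sq_nonneg _) (Finset.mem_univ j)
    _ ≤ ∑ i', ∑ j', A i' j' ^ 2 :=
        Finset.single_le_sum (f := fun i' => ∑ j', A i' j' ^ 2)
          (fun _ _ => Finset.sum_nonneg fun _ _ => sq_nonneg _) (Finset.mem_univ i)

lemma sqrt_sub_sq_le_abs {p q : ℝ} (hp : 0 ≤ p) (hq : 0 ≤ q) :
    (Real.sqrt p - Real.sqrt q) ^ 2 ≤ |p - q| := by
  have hap : Real.sqrt p ^ 2 = p := Real.sq_sqrt hp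
  have haq : Real.sqrt q ^ 2 = q := Real.sq_sqrt hq
  have h0p := Real.sqrt_nonneg p
  have h0q := Real.sqrt_nonneg q
  rcases le_total q p with h | h
  · have hs : Real.sqrt q ≤ Real.sqrt p := Real.sqrt_le_sqrt h
    rw [abs_of_nonneg (by linarith)]
    nlinarith
  · have hs : Real.sqrt p ≤ Real.sqrt q := Real.sqrt_le_sqrt h
    rw [abs_of_nonpos (by linarith)]
    nlinarith
lemma integrable_of_integral_eq_one {d : ℕ} {X : Set (Vec d)} {g : Vec d → ℝ}
    (hm : Measurable g) (h1 : (∫ x in X, g x) = 1) : IntegrableOn g X := by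
  by_contra h
  rw [MeasureTheory.integral_undef h] at h1
  exact one_ne_zero h1.symm

lemma cons_injective {P : Type*} {k : ℕ} {b : P} {a : Fin k → P}
    (hb : ∀ j, b ≠ a j) (ha : Function.Injective a) :
    Function.Injective (Fin.cons b a : Fin (k + 1) → P) := by
  intro i j h
  induction i using Fin.cases <;> induction j using Fin.cases <;>
    simp [Fin.cons_zero, Fin.cons_succ] at h ⊢
  · exact absurd h (hb _)
  · exact absurd h.symm (hb _)
  · exact ha h


set_option maxHeartbeats 1000000

/-- The Hellinger distance between two densities on `X`. -/
def Hellinger {d : ℕ} (X : Set (Vec d)) (p q : Vec d → ℝ) : ℝ :=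
  Real.sqrt ((1 / 2) * ∫ x in X, (Real.sqrt (p x) - Real.sqrt (q x)) ^ 2)

/-- **Proposition 3.1** (super-fast vanishing of the Hellinger distance when the
covariance parameter ranges over all of `S_{d₂}^{++}`): for every `r ≥ 1` and `β > 0`,
`lim_{ε→0} inf { exp(1/W_r(G,G₀)^β) h(p_G,p_{G₀}) : G ∈ O_k, 0 < W_r(G,G₀) ≤ ε } = 0`. -/
theorem hellinger_vanishes_superexponentially_unbounded_covariance
    {d d₁ d₂ : ℕ} (hd₂ : 1 ≤ d₂)
    (X : Set (Vec d)) (Θ : Set (Vec d₁))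
    (f : Vec d₁ × Mat d₂ → Vec d → ℝ)
    (hf : ∀ p ∈ Θ ×ˢ {M : Mat d₂ | M.PosDef},
      Measurable (f p) ∧ (∀ x, 0 ≤ f p x) ∧ (∫ x in X, f p x) = 1)
    (k₀ : ℕ) (hk₀ : 1 ≤ k₀)
    (G₀ : Mix (Vec d₁ × Mat d₂) k₀)
    (hG₀ : ∀ i, G₀.atom i ∈ Θ ×ˢ {M : Mat d₂ | M.PosDef})
    (k : ℕ) (hk : k₀ + 1 ≤ k) :
    ∀ r : ℝ, 1 ≤ r → ∀ β > (0 : ℝ), ∀ δ > (0 : ℝ), ∀ ε > (0 : ℝ),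
      ∃ (k' : ℕ) (_ : k' ≤ k) (G : Mix (Vec d₁ × Mat d₂) k'),
        (∀ i, G.atom i ∈ Θ ×ˢ {M : Mat d₂ | M.PosDef}) ∧
        0 < Wr parDist r G G₀ ∧ Wr parDist r G G₀ ≤ ε ∧
        Real.exp (1 / Wr parDist r G G₀ ^ β) *
            Hellinger X (Mix.density f G) (Mix.density f G₀) < δ := by
  intro r hr β hβ δ hδ ε hε
  have hr0 : (0:ℝ) < r := lt_of_lt_of_le one_pos hr
  have hrne : r ≠ 0 := ne_of_gt hr0
  have hd₂R : (1:ℝ) ≤ (d₂ : ℝ) := by exact_mod_cast hd₂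
  obtain ⟨i₀, hi₀⟩ : ∃ i₀ : Fin k₀, i₀ = ⟨0, hk₀⟩ := ⟨_, rfl⟩
  obtain ⟨a, ha⟩ : ∃ a, a = G₀.atom := ⟨_, rfl⟩
  obtain ⟨A, hAdef⟩ : ∃ A : ℝ, A = ∑ j, parDist (a i₀) (a j) := ⟨_, rfl⟩
  have hA0 : 0 ≤ A := hAdef ▸ Finset.sum_nonneg fun _ _ => parDist_nonneg _ _
  have hAj : ∀ j, parDist (a i₀) (a j) ≤ A := fun j => hAdef ▸
    Finset.single_le_sum (f := fun j => parDist (a i₀) (a j))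
      (fun _ _ => parDist_nonneg _ _) (Finset.mem_univ j)
  obtain ⟨w₀, hw₀def⟩ : ∃ w₀ : ℝ, w₀ = ε / (4 * d₂) := ⟨_, rfl⟩
  have hw₀ : 0 < w₀ := by rw [hw₀def]; apply div_pos hε; nlinarith
  obtain ⟨E, hEdef⟩ : ∃ E : ℝ, E = Real.exp (1 / w₀ ^ β) := ⟨_, rfl⟩
  have hE : 0 < E := hEdef ▸ Real.exp_pos _
  obtain ⟨R, hRdef⟩ : ∃ R : ℝ, R = 2*A + ε*(E/δ)^2 + ε + 2 := ⟨_, rfl⟩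
  have hEδ : 0 < ε*(E/δ)^2 := by positivity
  have hR1 : 1 ≤ R := by nlinarith
  have hR2A : 2*A + 2 ≤ R := by nlinarith
  have hRε : ε + 1 ≤ R := by nlinarith
  have hRED : ε*(E/δ)^2 < R := by nlinarith
  obtain ⟨D, hDdef⟩ : ∃ D : ℝ, D = A + d₂ * R := ⟨_, rfl⟩
  have hRD : R ≤ D := by nlinarith
  have hD0 : 0 < D := by nlinarith
  obtain ⟨m, hmdef⟩ : ∃ m : ℝ, m = (ε/D)^r := ⟨_, rfl⟩
  have hεD : 0 < ε/D := div_pos hε hD0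
  have hεD1 : ε/D < 1 := by rw [div_lt_one hD0]; nlinarith
  have hm0 : 0 < m := hmdef ▸ Real.rpow_pos_of_pos hεD r
  have hmle : m ≤ ε/D := by
    rw [hmdef]
    calc (ε/D)^r ≤ (ε/D)^(1:ℝ) := Real.rpow_le_rpow_of_exponent_ge hεD (le_of_lt hεD1) hr
      _ = ε/D := Real.rpow_one _
  have hm1 : m < 1 := lt_of_le_of_lt hmle hεD1
  rw [← ha] at hG₀
  -- the far-away atom
  obtain ⟨b, hbdef⟩ : ∃ b : Vec d₁ × Mat d₂, b = ((a i₀).1, (a i₀).2 + R • 1) := ⟨_, rfl⟩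
  have hbmem : b ∈ Θ ×ˢ {M : Mat d₂ | M.PosDef} := by
    rw [hbdef]
    refine ⟨(hG₀ i₀).1, ?_⟩
    have h1 : ((a i₀).2).PosDef := (hG₀ i₀).2
    have h2 : (R • (1 : Mat d₂)).PosSemidef := by
      rw [Matrix.posSemidef_iff_dotProduct_mulVec]
      constructor
      · simp [Matrix.IsHermitian, Matrix.conjTranspose_smul]
      · intro x
        simp only [Matrix.smul_mulVec, Matrix.one_mulVec, dotProduct_smul]
        have hx : (star x) ⬝ᵥ x = ∑ i, x i ^ 2 := by simp [dotProduct, sq]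
        rw [smul_eq_mul, hx]
        have hR0 : (0:ℝ) ≤ R := by linarith
        positivity
    exact h1.add_posSemidef h2
  -- distance bounds
  have hpd : ∀ j, parDist b (a j)
      = vnorm ((a i₀).1 - (a j).1) + mnorm (((a i₀).2 + R • 1) - (a j).2) := by
    intro j; rw [hbdef]; rfl
  have hdub : ∀ j, parDist b (a j) ≤ D := by
    intro j
    rw [hpd j]
    have h1 : ((a i₀).2 + R • 1) - (a j).2 = ((a i₀).2 - (a j).2) + R • 1 := by
      ext u v
      simp [Matrix.add_apply, Matrix.sub_apply]
      ring
    rw [h1]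
    have h2 := mnorm_add_le ((a i₀).2 - (a j).2) (R • (1 : Mat d₂))
    have h3 := mnorm_smul_one_le (d := d₂) hd₂ (R := R) (by linarith)
    have h4 := hAj j
    unfold parDist at h4
    linarith
  have hdlb : ∀ j, R - A ≤ parDist b (a j) := by
    intro j
    rw [hpd j]
    obtain ⟨x, hx⟩ : ∃ x : ℝ, x = ((a i₀).2 - (a j).2) ⟨0, hd₂⟩ ⟨0, hd₂⟩ := ⟨_, rfl⟩
    have hval : (((a i₀).2 + R • 1) - (a j).2) ⟨0, hd₂⟩ ⟨0, hd₂⟩ = x + R := by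
      simp [hx, Matrix.add_apply, Matrix.sub_apply, Matrix.one_apply_eq]
      ring
    have hent : |x + R| ≤ mnorm (((a i₀).2 + R • 1) - (a j).2) := by
      rw [← hval]; exact abs_entry_le_mnorm _ _ _
    have hent2 : |x| ≤ mnorm ((a i₀).2 - (a j).2) := hx ▸ abs_entry_le_mnorm _ _ _
    have hA' : mnorm ((a i₀).2 - (a j).2) ≤ A := by
      have h4 := hAj j
      unfold parDist at h4
      have h5 := vnorm_nonneg ((a i₀).1 - (a j).1)
      linarith
    have hv := vnorm_nonneg ((a i₀).1 - (a j).1)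
    have habs : R - |x| ≤ |x + R| := by
      have h5 : |(x + R) - x| ≤ |x + R| + |x| := abs_sub _ _
      have h6 : (x + R) - x = R := by ring
      rw [h6, abs_of_nonneg (by linarith : (0:ℝ) ≤ R)] at h5
      linarith
    linarith
  have hRA2 : R / 2 ≤ R - A := by linarith
  have hRA0 : 0 < R - A := by linarith
  have hbne : ∀ j, b ≠ a j := by
    intro j h
    have h1 := hdlb j
    rw [h, parDist_self] at h1
    linarith
  have hainj : Function.Injective a := by rw [ha]; exact G₀.atom_inj
  -- the perturbed mixing measure
  obtain ⟨G, hGw, hGatom⟩ : ∃ G : Mix (Vec d₁ × Mat d₂) (k₀+1),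
      G.w = Fin.cons m (fun i => (1-m) * G₀.w i) ∧ G.atom = Fin.cons b a := by
    refine ⟨⟨Fin.cons m (fun i => (1-m) * G₀.w i), Fin.cons b a, ?_, ?_, ?_⟩, rfl, rfl⟩
    · intro i
      induction i using Fin.cases with
      | zero => simpa using hm0
      | succ i =>
        simp only [Fin.cons_succ]
        exact mul_pos (by linarith) (G₀.w_pos i)
    · rw [Fin.sum_cons, ← Finset.mul_sum, G₀.w_sum]
      ring
    · exact cons_injective hbne hainj
  have hGmem : ∀ i, G.atom i ∈ Θ ×ˢ {M : Mat d₂ | M.PosDef} := by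
    intro i
    rw [hGatom]
    induction i using Fin.cases with
    | zero => simpa using hbmem
    | succ i => simp only [Fin.cons_succ]; exact hG₀ i
  -- the coupling
  obtain ⟨q, hqdef⟩ : ∃ q : Fin (k₀+1) → Fin k₀ → ℝ,
      q = Fin.cons (fun j => m * G₀.w j)
        (fun i j => if i = j then (1-m) * G₀.w i else 0) := ⟨_, rfl⟩
  have hq0 : ∀ i j, 0 ≤ q i j := by
    intro i j
    rw [hqdef]
    induction i using Fin.cases with
    | zero =>
      simp only [Fin.cons_zero]
      exact mul_nonneg hm0.le (G₀.w_pos j).le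
    | succ i =>
      simp only [Fin.cons_succ]
      split
      · exact mul_nonneg (by linarith) (G₀.w_pos i).le
      · exact le_refl 0
  have hqrow : ∀ i, ∑ j, q i j = G.w i := by
    intro i
    rw [hqdef, hGw]
    induction i using Fin.cases with
    | zero =>
      simp only [Fin.cons_zero, ← Finset.mul_sum, G₀.w_sum, mul_one]
    | succ i =>
      simp only [Fin.cons_succ]
      rw [Finset.sum_ite_eq Finset.univ i (fun _ => (1-m) * G₀.w i)]
      simp
  have hqcol : ∀ j, ∑ i, q i j = G₀.w j := by
    intro j
    rw [hqdef, Fin.sum_univ_succ]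
    simp only [Fin.cons_zero, Fin.cons_succ]
    rw [Finset.sum_ite_eq' Finset.univ j (fun i => (1-m) * G₀.w i)]
    simp only [Finset.mem_univ, if_true]
    ring
  -- the transport cost of this coupling
  have hWrPow_eq : WrPow parDist r G G₀ = sInf { c : ℝ |
      ∃ q : Fin (k₀+1) → Fin k₀ → ℝ,
      (∀ i j, 0 ≤ q i j) ∧ (∀ i, ∑ j, q i j = G.w i) ∧ (∀ j, ∑ i, q i j = G₀.w j) ∧
      c = ∑ i, ∑ j, q i j * parDist (G.atom i) (G₀.atom j) ^ r } := rfl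
  have hmem : (∑ i, ∑ j, q i j * parDist (G.atom i) (G₀.atom j) ^ r) ∈ { c : ℝ |
      ∃ q : Fin (k₀+1) → Fin k₀ → ℝ,
      (∀ i j, 0 ≤ q i j) ∧ (∀ i, ∑ j, q i j = G.w i) ∧ (∀ j, ∑ i, q i j = G₀.w j) ∧
      c = ∑ i, ∑ j, q i j * parDist (G.atom i) (G₀.atom j) ^ r } :=
    ⟨q, hq0, hqrow, hqcol, rfl⟩
  have hG0atom : ∀ j, G₀.atom j = a j := fun j => by rw [ha]
  have hGatom0 : G.atom 0 = b := by rw [hGatom]; rfl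
  have hGatomsucc : ∀ i : Fin k₀, G.atom i.succ = a i := by
    intro i; rw [hGatom]; simp [Fin.cons_succ]
  have hlow : ∀ c ∈ { c : ℝ |
      ∃ q : Fin (k₀+1) → Fin k₀ → ℝ,
      (∀ i j, 0 ≤ q i j) ∧ (∀ i, ∑ j, q i j = G.w i) ∧ (∀ j, ∑ i, q i j = G₀.w j) ∧
      c = ∑ i, ∑ j, q i j * parDist (G.atom i) (G₀.atom j) ^ r },
      m * (R-A) ^ r ≤ c := by
    rintro c ⟨p, hp0, hprow, hpcol, rfl⟩
    have h1 : ∀ j, p 0 j * (R-A) ^ r ≤ p 0 j * parDist (G.atom 0) (G₀.atom j) ^ r := by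
      intro j
      apply mul_le_mul_of_nonneg_left _ (hp0 0 j)
      apply Real.rpow_le_rpow hRA0.le _ hr0.le
      rw [hGatom0, hG0atom j]
      exact hdlb j
    have h2 : m * (R-A) ^ r ≤ ∑ j, p 0 j * parDist (G.atom 0) (G₀.atom j) ^ r := by
      calc m * (R-A) ^ r = (∑ j, p 0 j) * (R-A) ^ r := by
            rw [hprow 0, hGw]; simp [Fin.cons_zero]
        _ = ∑ j, p 0 j * (R-A) ^ r := by rw [Finset.sum_mul]
        _ ≤ _ := Finset.sum_le_sum fun j _ => h1 j
    calc m * (R-A) ^ r ≤ ∑ j, p 0 j * parDist (G.atom 0) (G₀.atom j) ^ r := h2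
      _ ≤ ∑ i, ∑ j, p i j * parDist (G.atom i) (G₀.atom j) ^ r := by
          apply Finset.single_le_sum
            (f := fun i => ∑ j, p i j * parDist (G.atom i) (G₀.atom j) ^ r)
          · intro i _
            exact Finset.sum_nonneg fun j _ => mul_nonneg (hp0 i j)
              (Real.rpow_nonneg (parDist_nonneg _ _) r)
          · exact Finset.mem_univ 0
  have hbdd : BddBelow { c : ℝ |
      ∃ q : Fin (k₀+1) → Fin k₀ → ℝ,
      (∀ i j, 0 ≤ q i j) ∧ (∀ i, ∑ j, q i j = G.w i) ∧ (∀ j, ∑ i, q i j = G₀.w j) ∧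
      c = ∑ i, ∑ j, q i j * parDist (G.atom i) (G₀.atom j) ^ r } := ⟨_, hlow⟩
  have hcost : (∑ i, ∑ j, q i j * parDist (G.atom i) (G₀.atom j) ^ r) ≤ m * D ^ r := by
    rw [Fin.sum_univ_succ]
    have hsecond : ∀ i : Fin k₀,
        ∑ j, q i.succ j * parDist (G.atom i.succ) (G₀.atom j) ^ r = 0 := by
      intro i
      apply Finset.sum_eq_zero
      intro j _
      rw [hqdef]
      simp only [Fin.cons_succ]
      by_cases h : i = j
      · subst h
        rw [hGatomsucc i, hG0atom i, parDist_self, Real.zero_rpow hrne, mul_zero]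
      · simp [h]
    rw [Finset.sum_congr rfl (fun i _ => hsecond i), Finset.sum_const_zero, add_zero]
    have hfirst : ∀ j, q 0 j * parDist (G.atom 0) (G₀.atom j) ^ r
        ≤ m * G₀.w j * D ^ r := by
      intro j
      have hq0j : q 0 j = m * G₀.w j := by rw [hqdef]; rfl
      rw [hq0j]
      apply mul_le_mul_of_nonneg_left _ (mul_nonneg hm0.le (G₀.w_pos j).le)
      apply Real.rpow_le_rpow (parDist_nonneg _ _) _ hr0.le
      rw [hGatom0, hG0atom j]
      exact hdub j
    calc ∑ j, q 0 j * parDist (G.atom 0) (G₀.atom j) ^ r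
        ≤ ∑ j, m * G₀.w j * D ^ r := Finset.sum_le_sum fun j _ => hfirst j
      _ = m * D ^ r := by
          rw [← Finset.sum_mul, ← Finset.mul_sum, G₀.w_sum, mul_one]
  have hWrPow_lb : m * (R-A) ^ r ≤ WrPow parDist r G G₀ := by
    rw [hWrPow_eq]
    exact le_csInf ⟨_, hmem⟩ hlow
  have hWrPow_ub : WrPow parDist r G G₀ ≤ m * D ^ r := by
    rw [hWrPow_eq]
    exact le_trans (csInf_le hbdd hmem) hcost
  have hWrPow_0 : 0 ≤ WrPow parDist r G G₀ :=
    le_trans (by positivity) hWrPow_lb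
  -- Wr bounds
  have hr1 : (0:ℝ) < 1/r := by positivity
  have hmr : m ^ (1/r : ℝ) = ε / D := by
    rw [hmdef, ← Real.rpow_mul hεD.le, mul_one_div_cancel hrne, Real.rpow_one]
  have hWr_ub : Wr parDist r G G₀ ≤ ε := by
    rw [Wr]
    calc WrPow parDist r G G₀ ^ (1/r : ℝ) ≤ (m * D ^ r) ^ (1/r : ℝ) :=
          Real.rpow_le_rpow hWrPow_0 hWrPow_ub hr1.le
      _ = m ^ (1/r : ℝ) * (D ^ r) ^ (1/r : ℝ) :=
          Real.mul_rpow hm0.le (Real.rpow_nonneg hD0.le r)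
      _ = (ε/D) * D := by
          rw [hmr, ← Real.rpow_mul hD0.le, mul_one_div_cancel hrne, Real.rpow_one]
      _ = ε := div_mul_cancel₀ ε hD0.ne'
  have hWr_lb : (ε/D) * (R-A) ≤ Wr parDist r G G₀ := by
    rw [Wr]
    calc (ε/D) * (R-A) = m ^ (1/r : ℝ) * ((R-A) ^ r) ^ (1/r : ℝ) := by
          rw [hmr, ← Real.rpow_mul hRA0.le, mul_one_div_cancel hrne, Real.rpow_one]
      _ = (m * (R-A) ^ r) ^ (1/r : ℝ) :=
          (Real.mul_rpow hm0.le (Real.rpow_nonneg hRA0.le r)).symm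
      _ ≤ WrPow parDist r G G₀ ^ (1/r : ℝ) :=
          Real.rpow_le_rpow (by positivity) hWrPow_lb hr1.le
  have hw₀Wr : w₀ ≤ Wr parDist r G G₀ := by
    have hDle : D ≤ 4 * d₂ * (R - A) := by
      have hp1 : 0 ≤ ((d₂:ℝ) - 1) * R := mul_nonneg (by linarith) (by linarith)
      have hp2 : (4*(d₂:ℝ)+1) * A ≤ (4*(d₂:ℝ)+1) * (R/2) :=
        mul_le_mul_of_nonneg_left (by linarith) (by linarith)
      nlinarith [hp1, hp2]
    have h1 : w₀ ≤ (ε/D) * (R-A) := by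
      rw [hw₀def, div_mul_eq_mul_div, div_le_div_iff₀ (by positivity) hD0]
      calc ε * D ≤ ε * (4 * d₂ * (R - A)) := mul_le_mul_of_nonneg_left hDle hε.le
        _ = ε * (R - A) * (4 * d₂) := by ring
    linarith
  have hWr_pos : 0 < Wr parDist r G G₀ := lt_of_lt_of_le hw₀ hw₀Wr
  -- exponential factor bound
  have hexp : Real.exp (1 / Wr parDist r G G₀ ^ β) ≤ E := by
    rw [hEdef]
    apply Real.exp_le_exp.2
    apply one_div_le_one_div_of_le (Real.rpow_pos_of_pos hw₀ β)
    exact Real.rpow_le_rpow hw₀.le hw₀Wr hβ.le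
  -- Hellinger bound
  have hfb := hf b hbmem
  have hfa : ∀ i, Measurable (f (a i)) ∧ (∀ x, 0 ≤ f (a i) x) ∧
      (∫ x in X, f (a i) x) = 1 := fun i => hf (a i) (hG₀ i)
  have hIb : IntegrableOn (f b) X := integrable_of_integral_eq_one hfb.1 hfb.2.2
  have hIa : ∀ i, IntegrableOn (f (a i)) X := fun i =>
    integrable_of_integral_eq_one (hfa i).1 (hfa i).2.2
  have hdens0 : ∀ x, Mix.density f G₀ x = ∑ i, G₀.w i * f (a i) x := by
    intro x; rw [ha]; rfl
  have hIp0 : IntegrableOn (Mix.density f G₀) X := by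
    have : Mix.density f G₀ = fun x => ∑ i, G₀.w i * f (a i) x := funext hdens0
    rw [this]
    exact integrable_finset_sum _ (fun i _ => (hIa i).const_mul _)
  have hint_p0 : ∫ x in X, Mix.density f G₀ x = 1 := by
    have h1 : Mix.density f G₀ = fun x => ∑ i, G₀.w i * f (a i) x := funext hdens0
    rw [h1, integral_finset_sum _ (fun i _ => (hIa i).const_mul _)]
    rw [Finset.sum_congr rfl (fun i _ => by
      rw [integral_const_mul, (hfa i).2.2, mul_one])]
    exact G₀.w_sum
  have hdensG : ∀ x, Mix.density f G x = m * f b x + (1-m) * Mix.density f G₀ x := by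
    intro x
    show ∑ i, G.w i * f (G.atom i) x = _
    rw [hGw, hGatom, Fin.sum_univ_succ]
    simp only [Fin.cons_zero, Fin.cons_succ]
    rw [hdens0 x, Finset.mul_sum]
    congr 1
    exact Finset.sum_congr rfl fun i _ => by ring
  have hp0 : ∀ x, 0 ≤ Mix.density f G₀ x := by
    intro x
    rw [hdens0 x]
    exact Finset.sum_nonneg fun i _ => mul_nonneg (G₀.w_pos i).le ((hfa i).2.1 x)
  have hpG : ∀ x, 0 ≤ Mix.density f G x := by
    intro x
    rw [hdensG x]
    exact add_nonneg (mul_nonneg hm0.le (hfb.2.1 x))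
      (mul_nonneg (by linarith) (hp0 x))
  have hpt : ∀ x, (Real.sqrt (Mix.density f G x) - Real.sqrt (Mix.density f G₀ x)) ^ 2
      ≤ m * (f b x + Mix.density f G₀ x) := by
    intro x
    have h1 := sqrt_sub_sq_le_abs (hpG x) (hp0 x)
    have h2 : Mix.density f G x - Mix.density f G₀ x
        = m * (f b x - Mix.density f G₀ x) := by rw [hdensG x]; ring
    have h3 : |f b x - Mix.density f G₀ x| ≤ f b x + Mix.density f G₀ x := by
      have h4 := abs_sub (f b x) (Mix.density f G₀ x)
      rwa [abs_of_nonneg (hfb.2.1 x), abs_of_nonneg (hp0 x)] at h4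
    calc (Real.sqrt (Mix.density f G x) - Real.sqrt (Mix.density f G₀ x)) ^ 2
        ≤ |Mix.density f G x - Mix.density f G₀ x| := h1
      _ = m * |f b x - Mix.density f G₀ x| := by
          rw [h2, abs_mul, abs_of_nonneg hm0.le]
      _ ≤ m * (f b x + Mix.density f G₀ x) := mul_le_mul_of_nonneg_left h3 hm0.le
  have hIg : IntegrableOn (fun x => m * (f b x + Mix.density f G₀ x)) X :=
    (hIb.add hIp0).const_mul m
  have hInt : (∫ x in X, (Real.sqrt (Mix.density f G x)
        - Real.sqrt (Mix.density f G₀ x)) ^ 2)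
      ≤ ∫ x in X, m * (f b x + Mix.density f G₀ x) :=
    integral_mono_of_nonneg (Filter.Eventually.of_forall fun x => sq_nonneg _) hIg
      (Filter.Eventually.of_forall hpt)
  have hIntval : (∫ x in X, m * (f b x + Mix.density f G₀ x)) = 2 * m := by
    rw [integral_const_mul, integral_add hIb hIp0, hfb.2.2, hint_p0]
    ring
  have hHel : Hellinger X (Mix.density f G) (Mix.density f G₀) ≤ Real.sqrt m := by
    rw [Hellinger]
    calc Real.sqrt ((1/2) * ∫ x in X, (Real.sqrt (Mix.density f G x)
          - Real.sqrt (Mix.density f G₀ x)) ^ 2)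
        ≤ Real.sqrt ((1/2) * (2 * m)) := Real.sqrt_le_sqrt (by linarith)
      _ = Real.sqrt m := by norm_num
  have hHel0 : 0 ≤ Hellinger X (Mix.density f G) (Mix.density f G₀) :=
    Real.sqrt_nonneg _
  -- conclusion
  have hmain : Real.exp (1 / Wr parDist r G G₀ ^ β)
      * Hellinger X (Mix.density f G) (Mix.density f G₀) ≤ E * Real.sqrt m :=
    mul_le_mul hexp hHel hHel0 hE.le
  have hfinal : E * Real.sqrt m < δ := by
    have hone : (E/δ)^2 * (δ/E)^2 = 1 := by field_simp
    have hδE : (0:ℝ) < (δ/E)^2 := by positivity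
    have h2 : ε/D < (δ/E)^2 := by
      rw [div_lt_iff₀ hD0]
      have h5 : ε * (E/δ)^2 < D := lt_of_lt_of_le hRED hRD
      have h6 := mul_lt_mul_of_pos_right h5 hδE
      calc ε = ε * ((E/δ)^2 * (δ/E)^2) := by rw [hone, mul_one]
        _ = ε * (E/δ)^2 * (δ/E)^2 := by ring
        _ < D * (δ/E)^2 := h6
        _ = (δ/E)^2 * D := by ring
    have h1 : m < (δ/E)^2 := lt_of_le_of_lt hmle h2
    have h3 : Real.sqrt m < δ/E := by
      have h4 := Real.sqrt_lt_sqrt hm0.le h1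
      rwa [Real.sqrt_sq (by positivity)] at h4
    calc E * Real.sqrt m < E * (δ/E) := mul_lt_mul_of_pos_left h3 hE
      _ = δ := by field_simp
  exact ⟨k₀+1, hk, G, hGmem, hWr_pos, hWr_ub, lt_of_le_of_lt hmain hfinal⟩
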